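/- Let n ≥ 2, let s < 0 be a real number, and let c > 0. Set E_c = {(τ, ξ) ∈ ℝ × ℝ^{n−1} : |τ| ≤ c‖ξ‖}. Then there exist constants 0 < C₁ ≤ C₂ such that for every measurable function F : ℝ × ℝ^{n−1} → ℂ vanishing almost everywhere outside E_c, one has C₁·∫ (1 + τ² + ‖ξ‖²)^s |F(τ,ξ)|² dτ dξ ≤ ∫ (1 + ‖ξ‖²)^s |F(τ,ξ)|² dτ dξ ≤ C₂·∫ (1 + τ² + ‖ξ‖²)^s |F(τ,ξ)|² dτ dξ, where the integrals are Lebesgue integrals of nonnegative measurable functions with values in [0, ∞]. -/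
import Mathlib


open MeasureTheory Real

/-- Equivalence of the full `H^s(ℝⁿ)` weight and the tangential `L²(ℝ; H^s(ℝ^{n-1}))` weight
for functions with (Fourier) support in the cone `E_c = {(τ,ξ) : |τ| ≤ c ‖ξ‖}`, `s < 0`. -/
theorem tangential_sobolev_norm_equivalence_on_cone
    (n : ℕ) (hn : 2 ≤ n) (s : ℝ) (hs : s < 0) (c : ℝ) (hc : 0 < c) :
    ∃ C₁ C₂ : ℝ, 0 < C₁ ∧ C₁ ≤ C₂ ∧
      ∀ F : ℝ × EuclideanSpace ℝ (Fin (n - 1)) → ℂ, Measurable F →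
        (∀ᵐ p : ℝ × EuclideanSpace ℝ (Fin (n - 1)),
          ¬ (|p.1| ≤ c * ‖p.2‖) → F p = 0) →
        ENNReal.ofReal C₁ *
            (∫⁻ p : ℝ × EuclideanSpace ℝ (Fin (n - 1)),
              ENNReal.ofReal ((1 + p.1 ^ 2 + ‖p.2‖ ^ 2) ^ s * ‖F p‖ ^ 2)) ≤
          (∫⁻ p : ℝ × EuclideanSpace ℝ (Fin (n - 1)),
            ENNReal.ofReal ((1 + ‖p.2‖ ^ 2) ^ s * ‖F p‖ ^ 2)) ∧
        (∫⁻ p : ℝ × EuclideanSpace ℝ (Fin (n - 1)),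
            ENNReal.ofReal ((1 + ‖p.2‖ ^ 2) ^ s * ‖F p‖ ^ 2)) ≤
          ENNReal.ofReal C₂ *
            (∫⁻ p : ℝ × EuclideanSpace ℝ (Fin (n - 1)),
              ENNReal.ofReal ((1 + p.1 ^ 2 + ‖p.2‖ ^ 2) ^ s * ‖F p‖ ^ 2)) := by
  refine ⟨1, (1 + c ^ 2) ^ (-s), one_pos, ?_, ?_⟩
  · have h1 : (1 : ℝ) ≤ 1 + c ^ 2 := by nlinarith [sq_nonneg c]
    calc (1 : ℝ) = 1 ^ (-s) := (Real.one_rpow _).symm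
    _ ≤ (1 + c ^ 2) ^ (-s) := Real.rpow_le_rpow zero_le_one h1 (by linarith)
  intro F hF hcone
  constructor
  · rw [ENNReal.ofReal_one, one_mul]
    refine lintegral_mono fun p => ?_
    apply ENNReal.ofReal_le_ofReal
    have h1 : (0 : ℝ) < 1 + ‖p.2‖ ^ 2 := by positivity
    have h2 : 1 + ‖p.2‖ ^ 2 ≤ 1 + p.1 ^ 2 + ‖p.2‖ ^ 2 := by nlinarith [sq_nonneg p.1]
    exact mul_le_mul_of_nonneg_right
      (Real.rpow_le_rpow_of_nonpos h1 h2 hs.le) (by positivity)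
  · rw [← lintegral_const_mul' _ _ ENNReal.ofReal_ne_top]
    refine lintegral_mono_ae (hcone.mono fun p hp => ?_)
    by_cases hcp : |p.1| ≤ c * ‖p.2‖
    · rw [← ENNReal.ofReal_mul (by positivity)]
      apply ENNReal.ofReal_le_ofReal
      rw [← mul_assoc]
      have h1 : (0 : ℝ) < 1 + p.1 ^ 2 + ‖p.2‖ ^ 2 := by nlinarith [sq_nonneg p.1, sq_nonneg ‖p.2‖]
      have h2 : 1 + p.1 ^ 2 + ‖p.2‖ ^ 2 ≤ (1 + c ^ 2) * (1 + ‖p.2‖ ^ 2) := by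
        have : p.1 ^ 2 ≤ c ^ 2 * ‖p.2‖ ^ 2 := by
          have := abs_nonneg p.1
          nlinarith [sq_abs p.1, mul_self_nonneg (c * ‖p.2‖)]
        nlinarith [sq_nonneg c, sq_nonneg ‖p.2‖]
      refine mul_le_mul_of_nonneg_right ?_ (by positivity)
      have key : (1 + ‖p.2‖ ^ 2) ^ s ≤ ((1 + p.1 ^ 2 + ‖p.2‖ ^ 2) / (1 + c ^ 2)) ^ s := by
        apply Real.rpow_le_rpow_of_nonpos (by positivity) _ hs.le
        rw [div_le_iff₀ (by positivity)]
        linarith [h2]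
      calc (1 + ‖p.2‖ ^ 2) ^ s ≤ ((1 + p.1 ^ 2 + ‖p.2‖ ^ 2) / (1 + c ^ 2)) ^ s := key
      _ = (1 + c ^ 2) ^ (-s) * (1 + p.1 ^ 2 + ‖p.2‖ ^ 2) ^ s := by
          rw [Real.div_rpow h1.le (by positivity), Real.rpow_neg (by positivity),
            div_eq_inv_mul, mul_comm]
      _ ≤ _ := le_refl _
    · rw [hp hcp]
      simp
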